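/- Redundant branch elimination: if K₁,…,Kₙ are pure action sequences and R(K_j) ⊆ R(Kₙ) for some j < n, then K₁ orElse ⋯ orElse Kₙ₋₁ orElse Kₙ ≈ K₁ orElse ⋯ orElse Kₙ₋₁ (with respect to weak atomic equivalence). -/

import Mathlib

/-- Actions: reads and writes of names. -/
inductive Act (N : Type*) where
  | rd (a : N)
  | wt (a : N)

/-- Multiset of names written in a log. -/
def Wl {N : Type*} : List (Act N) → Multiset N
  | [] => 0
  | .wt a :: δ => Wl δ + {a}
  | .rd _ :: δ => Wl δ

/-- Multiset of names read in a log. -/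
def Rl {N : Type*} : List (Act N) → Multiset N
  | [] => 0
  | .rd a :: δ => Rl δ + {a}
  | .wt _ :: δ => Rl δ

/-- Atomic expressions. -/
inductive Expr (N : Type*) where
  | done
  | retry
  | rd (a : N) (M : Expr N)
  | wt (a : N) (M : Expr N)
  | orElse (M₁ M₂ : Expr N)

/-- Ongoing atomic expressions. -/
inductive Ong (N : Type*) where
  | block (M : Expr N) (σ : Multiset N) (δ : List (Act N))
  | orElse (A B : Ong N)

/-- One-step reduction of ongoing expressions. -/
inductive Step {N : Type*} : Ong N → Ong N → Prop where
  | rdOk {a : N} {M σ δ} (h : Rl δ + {a} ≤ σ) :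
      Step (.block (.rd a M) σ δ) (.block M σ (δ ++ [.rd a]))
  | rdFail {a : N} {M σ δ} (h : ¬ Rl δ + {a} ≤ σ) :
      Step (.block (.rd a M) σ δ) (.block .retry σ δ)
  | wr {a : N} {M σ δ} :
      Step (.block (.wt a M) σ δ) (.block M σ (δ ++ [.wt a]))
  | orE {M₁ M₂ : Expr N} {σ δ} :
      Step (.block (.orElse M₁ M₂) σ δ) (.orElse (.block M₁ σ δ) (.block M₂ σ δ))
  | orFail {σ : Multiset N} {δ B} : Step (.orElse (.block .retry σ δ) B) B
  | orEnd {σ : Multiset N} {δ B} : Step (.orElse (.block .done σ δ) B) (.block .done σ δ)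
  | congL {A A' B : Ong N} (h : Step A A') : Step (.orElse A B) (.orElse A' B)
  | congR {A B B' : Ong N} (h : Step B B') : Step (.orElse A B) (.orElse A B')

/-- Multi-step reduction. -/
def Steps {N : Type*} : Ong N → Ong N → Prop := Relation.ReflTransGen Step

/-- Logs with the same effect on state σ. -/
def EffEq {N : Type*} [DecidableEq N] (σ : Multiset N) (δ δ' : List (Act N)) : Prop :=
  σ - Rl δ + Wl δ = σ - Rl δ' + Wl δ'

/-- Weak atomic equivalence. -/
def AEq {N : Type*} [DecidableEq N] (M M' : Expr N) : Prop :=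
  ∀ σ : Multiset N,
    ((∃ δ, Steps (.block M σ []) (.block .retry σ δ)) ∧
     (∃ δ', Steps (.block M' σ []) (.block .retry σ δ'))) ∨
    (∃ δ δ', Steps (.block M σ []) (.block .done σ δ) ∧
             Steps (.block M' σ []) (.block .done σ δ') ∧ EffEq σ δ δ')

/-- Prefixing an action onto an expression. -/
def pre {N : Type*} : Act N → Expr N → Expr N
  | .rd a, M => .rd a M
  | .wt a, M => .wt a M

/-- The pure sequence expression α₁.….αₙ.end. -/
def seq {N : Type*} (K : List (Act N)) : Expr N := K.foldr pre .done

/-- Right-nested orElse of a nonempty list of expressions. -/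
def ors {N : Type*} : Expr N → List (Expr N) → Expr N
  | M, [] => M
  | M, M' :: rest => .orElse M (ors M' rest)

lemma Rl_append {N : Type*} (δ₁ δ₂ : List (Act N)) :
    Rl (δ₁ ++ δ₂) = Rl δ₁ + Rl δ₂ := by
  induction δ₁ with
  | nil => simp [Rl]
  | cons a δ ih =>
    cases a with
    | rd a =>
      rw [List.cons_append]
      simp only [Rl]
      rw [ih, add_right_comm]
    | wt a => simp [Rl, ih]

lemma steps_congL {N : Type*} {A A' B : Ong N} (h : Steps A A') :
    Steps (.orElse A B) (.orElse A' B) := by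
  induction h with
  | refl => exact Relation.ReflTransGen.refl
  | tail _ h2 ih => exact ih.tail (Step.congL h2)

lemma seq_done {N : Type*} [DecidableEq N] :
    ∀ (K δ0 : List (Act N)) (σ : Multiset N), Rl δ0 + Rl K ≤ σ →
      Steps (.block (seq K) σ δ0) (.block .done σ (δ0 ++ K)) := by
  intro K
  induction K with
  | nil => intro δ0 σ _; simp [seq]; exact Relation.ReflTransGen.refl
  | cons a K ih =>
    intro δ0 σ hle
    cases a with
    | rd a =>
      have h1 : Rl δ0 + {a} ≤ σ := by
        refine le_trans ?_ hle
        simp only [Rl]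
        exact add_le_add_right (Multiset.le_add_left _ _) _
      refine Relation.ReflTransGen.head (Step.rdOk h1) ?_
      have h2 : Rl (δ0 ++ [Act.rd a]) + Rl K ≤ σ := by
        rw [Rl_append]
        simp only [Rl] at hle ⊢
        calc Rl δ0 + (Rl [] + {a}) + Rl K = Rl δ0 + (Rl K + {a}) := by
              simp only [Rl]; ac_rfl
          _ ≤ σ := hle
      have := ih (δ0 ++ [Act.rd a]) σ h2
      simpa [seq, pre, Steps] using this
    | wt a =>
      refine Relation.ReflTransGen.head Step.wr ?_
      have h2 : Rl (δ0 ++ [Act.wt a]) + Rl K ≤ σ := by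
        rw [Rl_append]; simpa [Rl] using hle
      have := ih (δ0 ++ [Act.wt a]) σ h2
      simpa [seq, pre, Steps] using this

lemma seq_retry {N : Type*} [DecidableEq N] :
    ∀ (K δ0 : List (Act N)) (σ : Multiset N), Rl δ0 ≤ σ → ¬ (Rl δ0 + Rl K ≤ σ) →
      ∃ δ, Steps (.block (seq K) σ δ0) (.block .retry σ δ) := by
  intro K
  induction K with
  | nil => intro δ0 σ h1 h2; exact absurd (by simpa [Rl] using h1) h2
  | cons a K ih =>
    intro δ0 σ h1 h2
    cases a with
    | rd a =>
      by_cases hok : Rl δ0 + {a} ≤ σ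
      · have h2' : ¬ (Rl (δ0 ++ [Act.rd a]) + Rl K ≤ σ) := by
          rw [Rl_append]
          intro hc
          apply h2
          simp only [Rl]
          calc Rl δ0 + (Rl K + {a}) = Rl δ0 + (Rl [] + {a}) + Rl K := by
                simp only [Rl]; ac_rfl
            _ ≤ σ := hc
        have h1' : Rl (δ0 ++ [Act.rd a]) ≤ σ := by
          rw [Rl_append]; simpa [Rl] using hok
        obtain ⟨δ, hδ⟩ := ih (δ0 ++ [Act.rd a]) σ h1' h2'
        exact ⟨δ, Relation.ReflTransGen.head (Step.rdOk hok) (by simpa [seq, pre, Steps] using hδ)⟩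
      · exact ⟨δ0, Relation.ReflTransGen.single (Step.rdFail hok)⟩
    | wt a =>
      have h2' : ¬ (Rl (δ0 ++ [Act.wt a]) + Rl K ≤ σ) := by
        rw [Rl_append]; simpa [Rl] using h2
      have h1' : Rl (δ0 ++ [Act.wt a]) ≤ σ := by
        rw [Rl_append]; simpa [Rl] using h1
      obtain ⟨δ, hδ⟩ := ih (δ0 ++ [Act.wt a]) σ h1' h2'
      exact ⟨δ, Relation.ReflTransGen.head Step.wr (by simpa [seq, pre, Steps] using hδ)⟩

lemma ors_done {N : Type*} {M : Expr N} {σ : Multiset N} {δ : List (Act N)}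
    (h : Steps (.block M σ []) (.block .done σ δ)) :
    ∀ Ms : List (Expr N), Steps (.block (ors M Ms) σ []) (.block .done σ δ) := by
  intro Ms
  cases Ms with
  | nil => exact h
  | cons e rest =>
    refine Relation.ReflTransGen.head Step.orE ?_
    exact (steps_congL h).tail Step.orEnd

lemma ors_skip {N : Type*} {M : Expr N} {σ : Multiset N}
    (h : ∃ δ, Steps (.block M σ []) (.block .retry σ δ)) (e : Expr N) (rest : List (Expr N)) :
    Steps (.block (ors M (e :: rest)) σ []) (.block (ors e rest) σ []) := by
  obtain ⟨δ, hδ⟩ := h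
  refine Relation.ReflTransGen.head Step.orE ?_
  exact (steps_congL hδ).tail Step.orFail

lemma ors_all_done {N : Type*} [DecidableEq N] :
    ∀ (tl : List (List (Act N))) (hd : List (Act N)) (σ : Multiset N),
      (∃ K ∈ hd :: tl, Rl K ≤ σ) →
      ∃ δ, ∀ extra : List (Expr N),
        Steps (.block (ors (seq hd) (tl.map seq ++ extra)) σ []) (.block .done σ δ) := by
  intro tl
  induction tl with
  | nil =>
    intro hd σ hex
    obtain ⟨K, hK, hle⟩ := hex
    simp only [List.mem_singleton] at hK
    subst hK
    refine ⟨K, fun extra => ?_⟩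
    have := seq_done K [] σ (by simpa [Rl] using hle)
    simpa using ors_done (by simpa using this) extra
  | cons t tl' ih =>
    intro hd σ hex
    by_cases hhd : Rl hd ≤ σ
    · refine ⟨hd, fun extra => ?_⟩
      have := seq_done hd [] σ (by simpa [Rl] using hhd)
      simpa using ors_done (by simpa using this) _
    · have hex' : ∃ K ∈ t :: tl', Rl K ≤ σ := by
        obtain ⟨K, hK, hle⟩ := hex
        rcases List.mem_cons.mp hK with hK | hK
        · exact absurd (hK ▸ hle) hhd
        · exact ⟨K, hK, hle⟩
      obtain ⟨δ, hδ⟩ := ih t σ hex'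
      refine ⟨δ, fun extra => ?_⟩
      have hskip := ors_skip (seq_retry hd [] σ (by simp [Rl])
        (by simpa [Rl] using hhd)) (seq t) (tl'.map seq ++ extra)
      have : Steps (.block (ors (seq hd) ((t :: tl').map seq ++ extra)) σ [])
          (.block (ors (seq t) (tl'.map seq ++ extra)) σ []) := by
        simpa using hskip
      exact this.trans (hδ extra)

lemma ors_all_retry {N : Type*} [DecidableEq N] :
    ∀ (tl : List (List (Act N))) (hd : List (Act N)) (σ : Multiset N),
      (∀ K ∈ hd :: tl, ¬ Rl K ≤ σ) →
      ∃ δ, Steps (.block (ors (seq hd) (tl.map seq)) σ []) (.block .retry σ δ) := by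
  intro tl
  induction tl with
  | nil =>
    intro hd σ hall
    have := seq_retry hd [] σ (by simp [Rl])
      (by simpa [Rl] using hall hd (by simp))
    simpa [ors] using this
  | cons t tl' ih =>
    intro hd σ hall
    obtain ⟨δ, hδ⟩ := ih t σ (fun K hK => hall K (List.mem_cons_of_mem hd hK))
    have hskip := ors_skip (seq_retry hd [] σ (by simp [Rl])
      (by simpa [Rl] using hall hd (by simp))) (seq t) (tl'.map seq)
    exact ⟨δ, (by simpa using hskip : Steps _ _).trans hδ⟩

/-- Redundant branch elimination: if some earlier branch's reads are included in
the reads of the last branch Kₙ, then Kₙ may be dropped up to ≈. -/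
theorem stmt16 {N : Type*} [DecidableEq N]
    (hd Kn : List (Act N)) (tl : List (List (Act N)))
    (h : ∃ Kj ∈ hd :: tl, Rl Kj ≤ Rl Kn) :
    AEq (ors (seq hd) (tl.map seq ++ [seq Kn])) (ors (seq hd) (tl.map seq)) := by
  intro σ
  by_cases hex : ∃ K ∈ hd :: tl, Rl K ≤ σ
  · right
    obtain ⟨δ, hδ⟩ := ors_all_done tl hd σ hex
    exact ⟨δ, δ, hδ [seq Kn], by simpa using hδ [], rfl⟩
  · left
    push_neg at hex
    have hKn : ¬ Rl Kn ≤ σ := by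
      obtain ⟨Kj, hKj, hle⟩ := h
      exact fun hc => hex Kj hKj (hle.trans hc)
    constructor
    · have hall : ∀ K ∈ hd :: (tl ++ [Kn]), ¬ Rl K ≤ σ := by
        intro K hK
        rcases List.mem_cons.mp hK with hK | hK
        · exact hK ▸ hex hd (by simp)
        · rcases List.mem_append.mp hK with hK | hK
          · exact hex K (List.mem_cons_of_mem _ hK)
          · simp only [List.mem_singleton] at hK; exact hK ▸ hKn
      obtain ⟨δ, hδ⟩ := ors_all_retry (tl ++ [Kn]) hd σ hall
      exact ⟨δ, by simpa [List.map_append] using hδ⟩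
    · exact ors_all_retry tl hd σ hex
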